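/- Let M ≥ 1, s ∈ (1/2,1) and b ∈ ℝ. Let w : ℝ → ℂ be a Schwartz function, α ∈ C¹(ℝ) with |α| ≤ M and |α′| ≤ M, and φ ∈ C²(ℝ) with 1/M ≤ φ′ ≤ M and |φ″| ≤ M. Then there exists a constant C = C(M, w, s) such that for every real a ≥ 1 and all positive integers n, N with a ∉ [nN/(2M), 2M·nN], | ∫_ℝ α(a^{−s}x + b) w(x) e^{2πi( nNφ(a^{−s}x + b) − a^{1−s}x )} dx | ≤ C·(nN)^{−(1−s)}. -/

import Mathlib

open MeasureTheory Complex Filter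


set_option maxHeartbeats 1000000 in
/-- the non-stationary phase estimate in Lemma 3.5: if the frequency `a` is
away from the band `[nN/(2M), 2MnN]`, then the oscillatory integral appearing in the wave
packet transform is of size `O((nN)^{−(1−s)})`, with a constant depending only on `M`, `w`
and `s`. -/
theorem nonstationary_phase_estimate
    (M s : ℝ) (hM : 1 ≤ M) (hs : 1 / 2 < s) (hs1 : s < 1) (w : SchwartzMap ℝ ℂ) :
    ∃ C : ℝ, 0 < C ∧
      ∀ (b : ℝ) (α : ℝ → ℝ) (φ : ℝ → ℝ),
        ContDiff ℝ 1 α → (∀ t, |α t| ≤ M) → (∀ t, |deriv α t| ≤ M) →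
        ContDiff ℝ 2 φ → (∀ t, 1 / M ≤ deriv φ t) → (∀ t, deriv φ t ≤ M) →
        (∀ t, |deriv (deriv φ) t| ≤ M) →
        ∀ (a : ℝ), 1 ≤ a → ∀ n N : ℕ, 0 < n → 0 < N →
          a ∉ Set.Icc (((n : ℝ) * N) / (2 * M)) (2 * M * ((n : ℝ) * N)) →
          ‖∫ x : ℝ,
              ((α (a ^ (-s) * x + b) : ℝ) : ℂ) * w x *
                Complex.exp
                  ((2 * Real.pi * ((n : ℝ) * N * φ (a ^ (-s) * x + b) - a ^ (1 - s) * x) : ℝ) *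
                    Complex.I)‖
            ≤ C * ((n : ℝ) * N) ^ (-(1 - s)) := by
  have hπ : (3:ℝ) < Real.pi := Real.pi_gt_three
  have hπ0 : (0:ℝ) < Real.pi := by linarith
  have hM0 : (0:ℝ) < M := by linarith
  set S : ℝ := (∫ x : ℝ, ‖w x‖) + ∫ x : ℝ, ‖deriv (w : ℝ → ℂ) x‖ with hS_def
  have hwint : Integrable (w : ℝ → ℂ) := w.integrable
  have hw'deriv : ∀ x : ℝ, deriv (w : ℝ → ℂ) x = (SchwartzMap.derivCLM ℝ ℂ w) x := by
    intro x; rw [SchwartzMap.derivCLM_apply]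
  have hw'int : Integrable (deriv (w : ℝ → ℂ)) := by
    have := (SchwartzMap.derivCLM ℝ ℂ w).integrable (μ := volume)
    exact this.congr (Eventually.of_forall fun x => (hw'deriv x).symm)
  have hS0 : 0 ≤ S := by
    have h1 : 0 ≤ ∫ x : ℝ, ‖w x‖ := integral_nonneg fun x => norm_nonneg _
    have h2 : 0 ≤ ∫ x : ℝ, ‖deriv (w : ℝ → ℂ) x‖ := integral_nonneg fun x => norm_nonneg _
    positivity
  refine ⟨(M ^ 2 + 2 * M ^ 4) * S + 1, by positivity, ?_⟩
  intro b α φ hα hαM hα'M hφ hφ'lo hφ'hi hφ''M a ha n N hn hN haI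
  have ha0 : (0:ℝ) < a := by linarith
  set Q : ℝ := (n : ℝ) * N with hQ_def
  have hQ1 : (1:ℝ) ≤ Q := by
    have h1 : (1:ℝ) ≤ (n:ℝ) := by exact_mod_cast hn
    have h2 : (1:ℝ) ≤ (N:ℝ) := by exact_mod_cast hN
    nlinarith
  have hQ0 : (0:ℝ) < Q := by linarith
  set r : ℝ := a ^ (-s) with hr_def
  have hr0 : (0:ℝ) < r := Real.rpow_pos_of_pos ha0 _
  have hr1 : r ≤ 1 := Real.rpow_le_one_of_one_le_of_nonpos ha (by linarith)
  have hars : a ^ (1 - s) = a * r := by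
    rw [hr_def, show (1 - s) = 1 + (-s) by ring, Real.rpow_add ha0, Real.rpow_one]
  -- smoothness facts
  have hφdiff : Differentiable ℝ φ := hφ.differentiable (by norm_num)
  have hφ'cd : ContDiff ℝ 1 (deriv φ) := by
    have : ContDiff ℝ (1 + 1) φ := by exact_mod_cast hφ
    exact (contDiff_succ_iff_deriv.mp this).2.2
  have hφ'diff : Differentiable ℝ (deriv φ) := hφ'cd.differentiable one_ne_zero
  have hφ''cont : Continuous (deriv (deriv φ)) := (contDiff_one_iff_deriv.mp hφ'cd).2
  have hαdiff : Differentiable ℝ α := hα.differentiable one_ne_zero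
  have hα'cont : Continuous (deriv α) := (contDiff_one_iff_deriv.mp hα).2
  have hwdiff : Differentiable ℝ (w : ℝ → ℂ) := w.differentiable
  have hw'cont : Continuous (deriv (w : ℝ → ℂ)) := by
    have := (SchwartzMap.derivCLM ℝ ℂ w).continuous
    exact this.congr fun x => (hw'deriv x).symm
  have hL : ∀ x : ℝ, HasDerivAt (fun y : ℝ => r * y + b) r x := by
    intro x
    simpa using ((hasDerivAt_id x).const_mul r).add_const b
  -- Phase and derivatives
  set ψ : ℝ → ℝ := fun x => 2 * Real.pi * (Q * φ (r * x + b) - a ^ (1 - s) * x) with hψ_def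
  set ψ1 : ℝ → ℝ := fun x => 2 * Real.pi * r * (Q * deriv φ (r * x + b) - a) with hψ1_def
  set ψ2 : ℝ → ℝ := fun x => 2 * Real.pi * r * (Q * (deriv (deriv φ) (r * x + b) * r)) with hψ2_def
  have hψd : ∀ x, HasDerivAt ψ (ψ1 x) x := by
    intro x
    have h1 : HasDerivAt (fun y : ℝ => φ (r * y + b)) (deriv φ (r * x + b) * r) x :=
      (hφdiff (r * x + b)).hasDerivAt.comp x (hL x)
    have h2 : HasDerivAt (fun y : ℝ => Q * φ (r * y + b) - a ^ (1 - s) * y)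
        (Q * (deriv φ (r * x + b) * r) - a ^ (1 - s)) x := by
      exact ((h1.const_mul Q).sub ((hasDerivAt_id x).const_mul (a ^ (1 - s)))).congr_deriv (by ring)
    have h3 := h2.const_mul (2 * Real.pi)
    exact h3.congr_deriv (by rw [hars]; ring)
  have hψ1d : ∀ x, HasDerivAt ψ1 (ψ2 x) x := by
    intro x
    have h1 : HasDerivAt (fun y : ℝ => deriv φ (r * y + b)) (deriv (deriv φ) (r * x + b) * r) x :=
      by have := (hφ'diff (r * x + b)).hasDerivAt.comp x (hL x); exact this
    simpa using ((h1.const_mul Q).sub_const a).const_mul (2 * Real.pi * r)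
  -- lower bounds on the phase derivative
  have hcase : a < Q / (2 * M) ∨ 2 * M * Q < a := by
    rcases not_and_or.mp (fun h => haI (Set.mem_Icc.mpr ⟨h.1, h.2⟩)) with h | h
    · left; linarith [not_le.mp h]
    · right; linarith [not_le.mp h]
  have hδ : ∀ x : ℝ, Q / (2 * M) ≤ |Q * deriv φ (r * x + b) - a| := by
    intro x
    rcases hcase with h | h
    · have h1 : Q / M ≤ Q * deriv φ (r * x + b) := by
        have := hφ'lo (r * x + b)
        have : Q * (1 / M) ≤ Q * deriv φ (r * x + b) := by nlinarith
        calc Q / M = Q * (1/M) := by ring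
        _ ≤ _ := this
      have h2 : Q / (2 * M) ≤ Q * deriv φ (r * x + b) - a := by
        have : Q / M - Q / (2*M) = Q / (2*M) := by field_simp; ring
        nlinarith [this]
      exact le_trans h2 (le_abs_self _)
    · have h1 : Q * deriv φ (r * x + b) ≤ M * Q := by
        have := hφ'hi (r * x + b); nlinarith
      have h2 : Q / (2 * M) ≤ a - Q * deriv φ (r * x + b) := by
        have hMQ : M * Q ≤ a / 2 := by nlinarith
        have h3 : (1:ℝ) ≤ 2 * M * M := by nlinarith
        have h4 : Q * 1 ≤ Q * (2 * M * M) := mul_le_mul_of_nonneg_left h3 hQ0.le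
        have h5 : Q / (2 * M) ≤ M * Q := by
          rw [div_le_iff₀ (by positivity : (0:ℝ) < 2 * M)]; nlinarith
        nlinarith
      calc Q / (2*M) ≤ a - Q * deriv φ (r * x + b) := h2
      _ ≤ |Q * deriv φ (r * x + b) - a| := by rw [abs_sub_comm]; exact le_abs_self _
  have hrδ : ∀ x : ℝ, Q ^ (1 - s) / (2 * M) ≤ r * |Q * deriv φ (r * x + b) - a| := by
    intro x
    have hQrs : Q ^ (1 - s) = Q ^ (-s) * Q := by
      rw [show (1 - s) = -s + 1 by ring, Real.rpow_add hQ0, Real.rpow_one]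
    rcases hcase with h | h
    · have haQ : a ≤ Q := by
        have : Q / (2 * M) ≤ Q / 2 := by
          apply div_le_div_of_nonneg_left (le_of_lt hQ0) (by norm_num) (by linarith)
        linarith
      have hrQ : Q ^ (-s) ≤ r := Real.rpow_le_rpow_of_nonpos ha0 haQ (by linarith)
      have hQs0 : (0:ℝ) < Q ^ (-s) := Real.rpow_pos_of_pos hQ0 _
      calc Q ^ (1 - s) / (2 * M) = Q ^ (-s) * (Q / (2 * M)) := by rw [hQrs]; ring
      _ ≤ r * |Q * deriv φ (r * x + b) - a| := by
        apply mul_le_mul hrQ (hδ x) (by positivity) (le_of_lt hr0)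
    · have h1 : Q * deriv φ (r * x + b) ≤ M * Q := by
        have := hφ'hi (r * x + b); nlinarith
      have h2 : a / 2 ≤ |Q * deriv φ (r * x + b) - a| := by
        have hMQ : M * Q ≤ a / 2 := by nlinarith
        have : a / 2 ≤ a - Q * deriv φ (r * x + b) := by nlinarith
        calc a/2 ≤ a - Q * deriv φ (r * x + b) := this
        _ ≤ _ := by rw [abs_sub_comm]; exact le_abs_self _
      have hais : a ^ (1 - s) = a ^ (-s) * a := by
        rw [show (1 - s) = -s + 1 by ring, Real.rpow_add ha0, Real.rpow_one]
      have haQ : Q ≤ a := by nlinarith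
      have hQa1s : Q ^ (1 - s) ≤ a ^ (1 - s) :=
        Real.rpow_le_rpow (le_of_lt hQ0) haQ (by linarith)
      have hstep : Q ^ (1 - s) / (2 * M) ≤ a ^ (1 - s) / 2 := by
        rw [div_le_div_iff₀ (by positivity) (by norm_num)]
        nlinarith [Real.rpow_pos_of_pos hQ0 (1-s)]
      calc Q ^ (1 - s) / (2 * M) ≤ a ^ (1 - s) / 2 := hstep
      _ = r * (a / 2) := by rw [hais, hr_def]; ring
      _ ≤ r * |Q * deriv φ (r * x + b) - a| :=
        mul_le_mul_of_nonneg_left h2 (le_of_lt hr0)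
  set c : ℝ := Real.pi / M * Q ^ (1 - s) with hc_def
  have hQ1s0 : (0:ℝ) < Q ^ (1 - s) := Real.rpow_pos_of_pos hQ0 _
  have hQs10 : (0:ℝ) < Q ^ (s - 1) := Real.rpow_pos_of_pos hQ0 _
  have hc0 : (0:ℝ) < c := by positivity
  have hψ1lb : ∀ x, c ≤ |ψ1 x| := by
    intro x
    have : |ψ1 x| = 2 * Real.pi * r * |Q * deriv φ (r * x + b) - a| := by
      rw [hψ1_def]; simp only []
      rw [abs_mul, abs_of_pos (by positivity : (0:ℝ) < 2 * Real.pi * r)]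
    rw [this]
    have := hrδ x
    calc c = Real.pi / M * Q ^ (1 - s) := rfl
    _ = 2 * Real.pi * (Q ^ (1-s) / (2 * M)) := by ring
    _ ≤ 2 * Real.pi * (r * |Q * deriv φ (r * x + b) - a|) := by
      apply mul_le_mul_of_nonneg_left this (by positivity)
    _ = 2 * Real.pi * r * |Q * deriv φ (r * x + b) - a| := by ring
  have hψ1ne : ∀ x, ψ1 x ≠ 0 := by
    intro x h
    have := hψ1lb x
    rw [h, abs_zero] at this
    linarith
  have hψ2ub : ∀ x, |ψ2 x| ≤ 2 * M ^ 3 / Real.pi * Q ^ (s - 1) * (ψ1 x) ^ 2 := by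
    intro x
    have habs : |ψ2 x| ≤ 2 * Real.pi * r ^ 2 * Q * M := by
      have e : ψ2 x = 2 * Real.pi * r ^ 2 * Q * deriv (deriv φ) (r * x + b) := by
        simp only [hψ2_def]; ring
      rw [e, abs_mul, abs_of_pos (by positivity : (0:ℝ) < 2 * Real.pi * r ^ 2 * Q)]
      exact mul_le_mul_of_nonneg_left (hφ''M _) (by positivity)
    have hsq : (ψ1 x) ^ 2 = (2 * Real.pi * r) ^ 2 * (Q * deriv φ (r * x + b) - a) ^ 2 := by
      rw [hψ1_def]; ring
    have hδ2 : (Q / (2 * M)) ^ 2 ≤ (Q * deriv φ (r * x + b) - a) ^ 2 := by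
      have h6 := pow_le_pow_left₀ (by positivity : (0:ℝ) ≤ Q / (2*M)) (hδ x) 2
      rwa [_root_.sq_abs] at h6
    have hQpow : Q ≤ Q ^ (s - 1) * Q ^ 2 := by
      have : Q ^ (s - 1) * Q ^ 2 = Q ^ (s + 1) := by
        rw [← Real.rpow_natCast Q 2, ← Real.rpow_add hQ0]
        norm_num
        congr 1
        ring
      rw [this]
      calc Q = Q ^ (1:ℝ) := (Real.rpow_one Q).symm
      _ ≤ Q ^ (s + 1) := Real.rpow_le_rpow_of_exponent_le hQ1 (by linarith)
    calc |ψ2 x| ≤ 2 * Real.pi * r ^ 2 * Q * M := habs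
    _ ≤ 2 * M ^ 3 / Real.pi * Q ^ (s - 1) * ((2 * Real.pi * r) ^ 2 * (Q / (2 * M)) ^ 2) := by
      have key : 2 * M ^ 3 / Real.pi * Q ^ (s - 1) * ((2 * Real.pi * r) ^ 2 * (Q / (2 * M)) ^ 2)
          = 2 * Real.pi * M * r ^ 2 * (Q ^ (s - 1) * Q ^ 2) := by
        field_simp
      rw [key]
      have h5 : 2 * Real.pi * M * r ^ 2 * Q ≤ 2 * Real.pi * M * r ^ 2 * (Q ^ (s-1) * Q ^ 2) :=
        mul_le_mul_of_nonneg_left hQpow (by positivity)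
      nlinarith
    _ ≤ 2 * M ^ 3 / Real.pi * Q ^ (s - 1) * (ψ1 x) ^ 2 := by
      rw [hsq]
      apply mul_le_mul_of_nonneg_left _ (by positivity)
      apply mul_le_mul_of_nonneg_left hδ2 (by positivity)
  -- continuity facts
  have haff : Continuous fun x : ℝ => r * x + b := by fun_prop
  have hφc : Continuous φ := hφ.continuous
  have hφ'c : Continuous (deriv φ) := hφ'cd.continuous
  have hαc : Continuous α := hα.continuous
  have hwc : Continuous (w : ℝ → ℂ) := w.continuous
  -- complex amplitude and phase factor
  set g : ℝ → ℂ := fun x => ((α (r * x + b) : ℝ) : ℂ) * w x with hg_def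
  set g' : ℝ → ℂ := fun x => ((deriv α (r * x + b) * r : ℝ) : ℂ) * w x
      + ((α (r * x + b) : ℝ) : ℂ) * deriv (w : ℝ → ℂ) x with hg'_def
  set h : ℝ → ℂ := fun x => Complex.I * ((ψ1 x : ℝ) : ℂ) with hh_def
  set h' : ℝ → ℂ := fun x => Complex.I * ((ψ2 x : ℝ) : ℂ) with hh'_def
  set u : ℝ → ℂ := fun x => g x / h x with hu_def
  set u' : ℝ → ℂ := fun x => (g' x * h x - g x * h' x) / (h x) ^ 2 with hu'_def
  set v : ℝ → ℂ := fun x => Complex.exp (((ψ x : ℝ) : ℂ) * Complex.I) with hv_def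
  set v' : ℝ → ℂ := fun x => v x * (((ψ1 x : ℝ) : ℂ) * Complex.I) with hv'_def
  have hh0 : ∀ x, h x ≠ 0 := by
    intro x
    simp only [hh_def]
    exact mul_ne_zero Complex.I_ne_zero (Complex.ofReal_ne_zero.mpr (hψ1ne x))
  have hgd : ∀ x, HasDerivAt g (g' x) x := by
    intro x
    have h1 : HasDerivAt (fun y : ℝ => α (r * y + b)) (deriv α (r * x + b) * r) x :=
      (hαdiff (r * x + b)).hasDerivAt.comp x (hL x)
    exact (h1.ofReal_comp).mul ((hwdiff x).hasDerivAt)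
  have hhd : ∀ x, HasDerivAt h (h' x) x := by
    intro x
    exact ((hψ1d x).ofReal_comp).const_mul Complex.I
  have hud : ∀ x, HasDerivAt u (u' x) x := fun x => (hgd x).div (hhd x) (hh0 x)
  have hvd : ∀ x, HasDerivAt v (v' x) x := by
    intro x
    exact (((hψd x).ofReal_comp).mul_const Complex.I).cexp
  have huv'eq : ∀ x, u x * v' x = g x * v x := by
    intro x
    simp only [hu_def, hv'_def, hh_def]
    have hne : ((ψ1 x : ℝ) : ℂ) ≠ 0 := Complex.ofReal_ne_zero.mpr (hψ1ne x)
    field_simp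
  -- norms
  have hnv : ∀ x, ‖v x‖ = 1 := by
    intro x
    simp only [hv_def]
    rw [Complex.norm_exp_ofReal_mul_I]
  have hH : ∀ x, ‖h x‖ = |ψ1 x| := by
    intro x
    simp only [hh_def]
    rw [norm_mul, Complex.norm_I, one_mul, Complex.norm_real, Real.norm_eq_abs]
  have hH' : ∀ x, ‖h' x‖ = |ψ2 x| := by
    intro x
    simp only [hh'_def]
    rw [norm_mul, Complex.norm_I, one_mul, Complex.norm_real, Real.norm_eq_abs]
  have hgb : ∀ x, ‖g x‖ ≤ M * ‖w x‖ := by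
    intro x
    simp only [hg_def]
    rw [norm_mul, Complex.norm_real, Real.norm_eq_abs]
    exact mul_le_mul_of_nonneg_right (hαM _) (norm_nonneg _)
  have hg'b : ∀ x, ‖g' x‖ ≤ M * (‖w x‖ + ‖deriv (w : ℝ → ℂ) x‖) := by
    intro x
    simp only [hg'_def]
    have t1 : ‖((deriv α (r * x + b) * r : ℝ) : ℂ) * w x‖ ≤ M * ‖w x‖ := by
      rw [norm_mul, Complex.norm_real, Real.norm_eq_abs, abs_mul, abs_of_pos hr0]
      have : |deriv α (r * x + b)| * r ≤ M * 1 :=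
        mul_le_mul (hα'M _) hr1 hr0.le (by linarith)
      rw [mul_one] at this
      exact mul_le_mul_of_nonneg_right this (norm_nonneg _)
    have t2 : ‖((α (r * x + b) : ℝ) : ℂ) * deriv (w : ℝ → ℂ) x‖
        ≤ M * ‖deriv (w : ℝ → ℂ) x‖ := by
      rw [norm_mul, Complex.norm_real, Real.norm_eq_abs]
      exact mul_le_mul_of_nonneg_right (hαM _) (norm_nonneg _)
    calc ‖_ + _‖ ≤ _ := norm_add_le _ _
    _ ≤ M * ‖w x‖ + M * ‖deriv (w : ℝ → ℂ) x‖ := add_le_add t1 t2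
    _ = M * (‖w x‖ + ‖deriv (w : ℝ → ℂ) x‖) := by ring
  have hu'b : ∀ x, ‖u' x‖
      ≤ (M ^ 2 + 2 * M ^ 4) * Q ^ (s - 1) * (‖w x‖ + ‖deriv (w : ℝ → ℂ) x‖) := by
    intro x
    set nw := ‖w x‖ with hnw_def
    set nw' := ‖deriv (w : ℝ → ℂ) x‖ with hnw'_def
    have hnw0 : 0 ≤ nw := norm_nonneg _
    have hnw'0 : 0 ≤ nw' := norm_nonneg _
    have hψ1pos : 0 < |ψ1 x| := lt_of_lt_of_le hc0 (hψ1lb x)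
    have hK : |ψ2 x| ≤ 2 * M ^ 3 / Real.pi * Q ^ (s - 1) * |ψ1 x| ^ 2 := by
      rw [_root_.sq_abs]
      exact hψ2ub x
    have e1 : ‖u' x‖ = ‖g' x * h x - g x * h' x‖ / |ψ1 x| ^ 2 := by
      simp only [hu'_def]
      rw [norm_div, norm_pow, hH]
    have e2 : ‖g' x * h x - g x * h' x‖
        ≤ M * (nw + nw') * |ψ1 x| + M * nw * (2 * M ^ 3 / Real.pi * Q ^ (s - 1) * |ψ1 x| ^ 2) := by
      calc ‖g' x * h x - g x * h' x‖ ≤ ‖g' x * h x‖ + ‖g x * h' x‖ := norm_sub_le _ _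
      _ = ‖g' x‖ * |ψ1 x| + ‖g x‖ * |ψ2 x| := by rw [norm_mul, hH, norm_mul, hH']
      _ ≤ M * (nw + nw') * |ψ1 x| + M * nw * (2 * M ^ 3 / Real.pi * Q ^ (s - 1) * |ψ1 x| ^ 2) := by
        apply add_le_add
        · exact mul_le_mul_of_nonneg_right (hg'b x) (abs_nonneg _)
        · exact mul_le_mul (hgb x) hK (abs_nonneg _) (by positivity)
    have step1 : ‖u' x‖ ≤ M * (nw + nw') / |ψ1 x| + M * nw * (2 * M ^ 3 / Real.pi * Q ^ (s - 1)) := by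
      rw [e1]
      have e3gen : ∀ X Y K p : ℝ, p ≠ 0 → (X * p + Y * (K * p ^ 2)) / p ^ 2 = X / p + Y * K := by
        intro X Y K p hp
        field_simp
      have e3 := e3gen (M * (nw + nw')) (M * nw) (2 * M ^ 3 / Real.pi * Q ^ (s - 1)) (|ψ1 x|)
        hψ1pos.ne'
      rw [← e3]
      exact (div_le_div_iff_of_pos_right (pow_pos hψ1pos 2)).mpr e2
    have step2 : M * (nw + nw') / |ψ1 x| ≤ M ^ 2 * Q ^ (s - 1) * (nw + nw') := by
      have hQQ : Q ^ (s - 1) * Q ^ (1 - s) = 1 := by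
        rw [← Real.rpow_add hQ0]
        norm_num
      have h7 : M * (nw + nw') / |ψ1 x| ≤ M * (nw + nw') / c := by
        apply div_le_div_of_nonneg_left (by positivity) hc0 (hψ1lb x)
      have expand : M ^ 2 * Q ^ (s - 1) * (nw + nw') * (Real.pi / M * Q ^ (1 - s))
          = M * Real.pi * (nw + nw') * (Q ^ (s - 1) * Q ^ (1 - s)) := by
        field_simp [hM0.ne']
      have h8 : M * (nw + nw') / c ≤ M ^ 2 * Q ^ (s - 1) * (nw + nw') := by
        rw [div_le_iff₀ hc0, hc_def, expand, hQQ, mul_one]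
        nlinarith [mul_nonneg (mul_nonneg hM0.le (add_nonneg hnw0 hnw'0))
          (by linarith : (0:ℝ) ≤ Real.pi - 1)]
      linarith
    have step3 : M * nw * (2 * M ^ 3 / Real.pi * Q ^ (s - 1)) ≤ 2 * M ^ 4 * Q ^ (s - 1) * nw := by
      have e : M * nw * (2 * M ^ 3 / Real.pi * Q ^ (s - 1))
          = 2 * M ^ 4 * Q ^ (s - 1) * nw / Real.pi := by
        field_simp
      rw [e]
      exact div_le_self (by positivity) (by linarith)
    have final : M ^ 2 * Q ^ (s - 1) * (nw + nw') + 2 * M ^ 4 * Q ^ (s - 1) * nw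
        ≤ (M ^ 2 + 2 * M ^ 4) * Q ^ (s - 1) * (nw + nw') := by
      nlinarith [mul_nonneg (mul_nonneg (by positivity : (0:ℝ) ≤ 2 * M ^ 4) hQs10.le) hnw'0]
    linarith
  -- continuity of the pieces
  have hgc : Continuous g := by
    simp only [hg_def]
    exact (Complex.continuous_ofReal.comp (hαc.comp haff)).mul hwc
  have hg'c : Continuous g' := by
    simp only [hg'_def]
    exact ((Complex.continuous_ofReal.comp ((hα'cont.comp haff).mul continuous_const)).mul hwc).add
      ((Complex.continuous_ofReal.comp (hαc.comp haff)).mul hw'cont)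
  have hψc : Continuous ψ := by
    simp only [hψ_def]
    fun_prop
  have hψ1c : Continuous ψ1 := by
    simp only [hψ1_def]
    fun_prop
  have hψ2c : Continuous ψ2 := by
    simp only [hψ2_def]
    fun_prop
  have hhc : Continuous h := by
    simp only [hh_def]
    exact continuous_const.mul (Complex.continuous_ofReal.comp hψ1c)
  have hh'c : Continuous h' := by
    simp only [hh'_def]
    exact continuous_const.mul (Complex.continuous_ofReal.comp hψ2c)
  have hvc : Continuous v := by
    simp only [hv_def]
    exact Complex.continuous_exp.comp ((Complex.continuous_ofReal.comp hψc).mul continuous_const)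
  have huc : Continuous u := by
    simp only [hu_def]
    exact hgc.div hhc hh0
  have hu'c : Continuous u' := by
    simp only [hu'_def]
    exact ((hg'c.mul hhc).sub (hgc.mul hh'c)).div (hhc.pow 2) fun x => pow_ne_zero 2 (hh0 x)
  -- integrability
  have hInt_gv : Integrable (fun x => g x * v x) := by
    apply Integrable.mono' (hwint.norm.const_mul M) (hgc.mul hvc).aestronglyMeasurable
    filter_upwards with x
    rw [Pi.mul_apply, norm_mul, hnv, mul_one]
    exact hgb x
  have hInt_uv' : Integrable (u * v') := by
    rw [show (u * v') = fun x => g x * v x from funext huv'eq]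
    exact hInt_gv
  have hInt_u'v : Integrable (fun x => u' x * v x) := by
    apply Integrable.mono'
      (((hwint.norm.add hw'int.norm)).const_mul ((M ^ 2 + 2 * M ^ 4) * Q ^ (s - 1)))
      (hu'c.mul hvc).aestronglyMeasurable
    filter_upwards with x
    rw [Pi.mul_apply, norm_mul, hnv, mul_one]
    exact hu'b x
  have hInt_uv : Integrable (fun x => u x * v x) := by
    apply Integrable.mono' ((hwint.norm.const_mul M).div_const c)
      (huc.mul hvc).aestronglyMeasurable
    filter_upwards with x
    rw [Pi.mul_apply, norm_mul, hnv, mul_one]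
    simp only [hu_def]
    rw [norm_div, hH]
    calc ‖g x‖ / |ψ1 x| ≤ ‖g x‖ / c := div_le_div_of_nonneg_left (norm_nonneg _) hc0 (hψ1lb x)
    _ ≤ M * ‖w x‖ / c := (div_le_div_iff_of_pos_right hc0).mpr (hgb x)
  -- integration by parts
  have key : ∫ x : ℝ, u x * v' x = - ∫ x : ℝ, u' x * v x :=
    MeasureTheory.integral_mul_deriv_eq_deriv_mul_of_integrable (fun x _ => hud x) (fun x _ => hvd x) hInt_uv'
      (by simpa [Pi.mul_def] using hInt_u'v) (by simpa [Pi.mul_def] using hInt_uv)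
  have hflip : ∫ x : ℝ, g x * v x = - ∫ x : ℝ, u' x * v x := by
    rw [← funext huv'eq]
    exact key
  rw [show (-(1 - s) : ℝ) = s - 1 by ring]
  calc ‖∫ x : ℝ, ((α (r * x + b) : ℝ) : ℂ) * w x *
        Complex.exp (((2 * Real.pi * (Q * φ (r * x + b) - a ^ (1 - s) * x) : ℝ)) * Complex.I)‖
      = ‖∫ x : ℝ, g x * v x‖ := by rfl
    _ = ‖∫ x : ℝ, u' x * v x‖ := by rw [hflip, norm_neg]
    _ ≤ ∫ x : ℝ, ‖u' x * v x‖ := norm_integral_le_integral_norm _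
    _ ≤ ∫ x : ℝ, (M ^ 2 + 2 * M ^ 4) * Q ^ (s - 1) * (‖w x‖ + ‖deriv (w : ℝ → ℂ) x‖) := by
        apply integral_mono hInt_u'v.norm
          (((hwint.norm.add hw'int.norm)).const_mul ((M ^ 2 + 2 * M ^ 4) * Q ^ (s - 1)))
        intro x
        simp only []
        rw [norm_mul, hnv, mul_one]
        exact hu'b x
    _ = (M ^ 2 + 2 * M ^ 4) * Q ^ (s - 1) * S := by
        rw [integral_const_mul, integral_add hwint.norm hw'int.norm]
    _ ≤ ((M ^ 2 + 2 * M ^ 4) * S + 1) * Q ^ (s - 1) := by nlinarith [hQs10, hS0]
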